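/- Let M be a finitely generated Aₙ(K)-module with generators f₁,…,f_m, let E be a free Aₙ(K)-module with basis e₁,…,e_m, π : E → M the Aₙ(K)-epimorphism with π(eᵢ) = fᵢ, N = Ker π, and G = {g₁,…,g_d} an (x,∂)-Gröbner basis of N. For r, s ∈ ℕ let M_{rs} = Σᵢ₌₁^m W_{rs}fᵢ, and let U_{rs} be the set of terms w ∈ Θe with ord_x w ≤ r, ord_∂ w ≤ s, such that either w is not a multiple of any u_{gᵢ} (1 ≤ i ≤ d), or for every θ ∈ Θ and gⱼ ∈ G with w = θu_{gⱼ} one has ord_∂(θv_{gⱼ}) > s. Then π(U_{rs}) is a basis of the K-vector space M_{rs}. -/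

import Mathlib

open scoped BigOperators

set_option maxHeartbeats 1000000
set_option synthInstance.maxHeartbeats 400000

/-- The operator of multiplication by the variable `xᵢ` on `K[x₁,…,xₙ]`. -/
noncomputable def mulX (K : Type*) [CommRing K] (n : ℕ) (i : Fin n) :
    Module.End K (MvPolynomial (Fin n) K) :=
  LinearMap.mulLeft K (MvPolynomial.X i)

/-- The partial differentiation operator `∂ᵢ` on `K[x₁,…,xₙ]`. -/
noncomputable def pdOp (K : Type*) [CommRing K] (n : ℕ) (i : Fin n) :
    Module.End K (MvPolynomial (Fin n) K) :=
  (MvPolynomial.pderiv (R := K) i).toLinearMap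

/-- The Weyl algebra `Aₙ(K)`: the `K`-subalgebra of `End_K K[x₁,…,xₙ]`
generated by the multiplication operators `xᵢ` and the derivations `∂ᵢ`. -/
noncomputable def WeylAlgebra (K : Type*) [CommRing K] (n : ℕ) :
    Subalgebra K (Module.End K (MvPolynomial (Fin n) K)) :=
  Algebra.adjoin K (Set.range (mulX K n) ∪ Set.range (pdOp K n))

/-- The monomial `x^α ∂^β` as an endomorphism of `K[x₁,…,xₙ]`. -/
noncomputable def wMonEnd (K : Type*) [CommRing K] (n : ℕ) (α β : Fin n → ℕ) :
    Module.End K (MvPolynomial (Fin n) K) :=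
  (List.ofFn fun i => mulX K n i ^ α i).prod * (List.ofFn fun i => pdOp K n i ^ β i).prod

lemma wMonEnd_mem (K : Type*) [CommRing K] (n : ℕ) (α β : Fin n → ℕ) :
    wMonEnd K n α β ∈ WeylAlgebra K n := by
  apply mul_mem
  · apply list_prod_mem
    intro D hD
    obtain ⟨i, rfl⟩ := List.mem_ofFn.mp hD
    exact pow_mem (Algebra.subset_adjoin (Set.mem_union_left _ (Set.mem_range_self i))) _
  · apply list_prod_mem
    intro D hD
    obtain ⟨i, rfl⟩ := List.mem_ofFn.mp hD
    exact pow_mem (Algebra.subset_adjoin (Set.mem_union_right _ (Set.mem_range_self i))) _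

/-- The monomial `x^α ∂^β` as an element of the Weyl algebra. -/
noncomputable def wMon (K : Type*) [CommRing K] (n : ℕ) (α β : Fin n → ℕ) :
    WeylAlgebra K n :=
  ⟨wMonEnd K n α β, wMonEnd_mem K n α β⟩

/-- The `r`-th component `W_r` of the Bernstein filtration of `Aₙ(K)`:
the `K`-span of the monomials `x^α ∂^β` with `|α| + |β| ≤ r`. -/
noncomputable def bernW (K : Type*) [Field K] (n : ℕ) (r : ℕ) :
    Submodule K (WeylAlgebra K n) :=
  Submodule.span K {D | ∃ α β : Fin n → ℕ,
    (∑ i, α i) + (∑ i, β i) ≤ r ∧ D = wMon K n α β}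

/-- The natural (Bernstein) filtration `M_r = Σᵢ W_r gᵢ` of a module over
the Weyl algebra associated with a system of generators `g`. -/
noncomputable def bernFil (K : Type*) [Field K] (n : ℕ) (M : Type*) [AddCommGroup M]
    [Module (WeylAlgebra K n) M] [Module K M] [IsScalarTower K (WeylAlgebra K n) M]
    (p : ℕ) (g : Fin p → M) (r : ℕ) : Submodule K M :=
  Submodule.span K {x | ∃ (α β : Fin n → ℕ) (j : Fin p),
    (∑ i, α i) + (∑ i, β i) ≤ r ∧ x = wMon K n α β • g j}

/-- The natural bifiltration `M_{rs} = Σᵢ W_{rs} gᵢ`. -/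
noncomputable def biFil (K : Type*) [Field K] (n : ℕ) (M : Type*) [AddCommGroup M]
    [Module (WeylAlgebra K n) M] [Module K M] [IsScalarTower K (WeylAlgebra K n) M]
    (p : ℕ) (g : Fin p → M) (r s : ℕ) : Submodule K M :=
  Submodule.span K {x | ∃ (α β : Fin n → ℕ) (j : Fin p),
    (∑ i, α i) ≤ r ∧ (∑ i, β i) ≤ s ∧ x = wMon K n α β • g j}

/-- The index of a monomial `x^α ∂^β` of the Weyl algebra: the pair `(α, β)`. -/
abbrev WMon (n : ℕ) := (Fin n → ℕ) × (Fin n → ℕ)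

/-- `ord_x (x^α ∂^β) = |α|`. -/
def ordX {n : ℕ} (θ : WMon n) : ℕ := ∑ i, θ.1 i

/-- `ord_∂ (x^α ∂^β) = |β|`. -/
def ordD {n : ℕ} (θ : WMon n) : ℕ := ∑ i, θ.2 i

/-- Lexicographic comparison of exponent vectors. -/
def lexLt {n : ℕ} (f g : Fin n → ℕ) : Prop :=
  ∃ i, (∀ j, j < i → f j = g j) ∧ f i < g i

/-- The order `<_x` on monomials: lexicographic comparison of
`(ord_x θ, ord_∂ θ, α₁,…,αₙ, β₁,…,βₙ)`. -/
def monLtX {n : ℕ} (θ θ' : WMon n) : Prop :=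
  ordX θ < ordX θ' ∨ (ordX θ = ordX θ' ∧ (ordD θ < ordD θ' ∨ (ordD θ = ordD θ' ∧
    (lexLt θ.1 θ'.1 ∨ (θ.1 = θ'.1 ∧ lexLt θ.2 θ'.2)))))

/-- The order `<_∂` on monomials: lexicographic comparison of
`(ord_∂ θ, ord_x θ, β₁,…,βₙ, α₁,…,αₙ)`. -/
def monLtD {n : ℕ} (θ θ' : WMon n) : Prop :=
  ordD θ < ordD θ' ∨ (ordD θ = ordD θ' ∧ (ordX θ < ordX θ' ∨ (ordX θ = ordX θ' ∧
    (lexLt θ.2 θ'.2 ∨ (θ.2 = θ'.2 ∧ lexLt θ.1 θ'.1)))))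

/-- Divisibility of monomials: componentwise comparison of exponents. -/
def monDvd {n : ℕ} (θ θ' : WMon n) : Prop := θ.1 ≤ θ'.1 ∧ θ.2 ≤ θ'.2

/-- The quotient `θ'/θ` of monomials (componentwise truncated subtraction). -/
def monQuot {n : ℕ} (θ' θ : WMon n) : WMon n := (θ'.1 - θ.1, θ'.2 - θ.2)

/-- The (commutative) product of monomial indices. -/
def monMul {n : ℕ} (θ θ' : WMon n) : WMon n := (θ.1 + θ'.1, θ.2 + θ'.2)

/-- The least common multiple of two monomials. -/
def monLcm {n : ℕ} (θ θ' : WMon n) : WMon n := (θ.1 ⊔ θ'.1, θ.2 ⊔ θ'.2)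

/-- The index of a term `θ eⱼ` of a free module with basis `e₁,…,e_m`. -/
abbrev WTerm (n m : ℕ) := WMon n × Fin m

/-- The order `<_x` on terms. -/
def termLtX {n m : ℕ} (t t' : WTerm n m) : Prop :=
  monLtX t.1 t'.1 ∨ (t.1 = t'.1 ∧ t.2 < t'.2)

/-- The order `<_∂` on terms. -/
def termLtD {n m : ℕ} (t t' : WTerm n m) : Prop :=
  monLtD t.1 t'.1 ∨ (t.1 = t'.1 ∧ t.2 < t'.2)

/-- `t` divides `t'` as terms: same basis vector, dividing monomial. -/
def termDvd {n m : ℕ} (t t' : WTerm n m) : Prop := t.2 = t'.2 ∧ monDvd t.1 t'.1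

/-- Multiplication of a term by a monomial (on the level of indices). -/
def termMulMon {n m : ℕ} (θ : WMon n) (t : WTerm n m) : WTerm n m := (monMul θ t.1, t.2)

/-- The monomial quotient `t'/t` of two terms. -/
def termQuot {n m : ℕ} (t' t : WTerm n m) : WMon n := monQuot t'.1 t.1

/-- The monomial `x^α ∂^β` of the Weyl algebra indexed by `θ = (α, β)`. -/
noncomputable def wMonOf (K : Type*) [CommRing K] (n : ℕ) (θ : WMon n) :
    WeylAlgebra K n := wMon K n θ.1 θ.2

section Groebner

variable {K : Type*} [Field K] [CharZero K] {n m : ℕ}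
variable {E : Type*} [AddCommGroup E] [Module (WeylAlgebra K n) E]
  [Module K E] [IsScalarTower K (WeylAlgebra K n) E]

/-- `t` is the `x`-leader `u_f` of `f`: `t` appears in `f` and every other
term appearing in `f` is smaller with respect to `<_x`. -/
def IsXLeader (B : Module.Basis (WTerm n m) K E) (f : E) (t : WTerm n m) : Prop :=
  B.repr f t ≠ 0 ∧ ∀ t', B.repr f t' ≠ 0 → t' = t ∨ termLtX t' t

/-- `t` is the `∂`-leader `v_f` of `f`. -/
def IsDLeader (B : Module.Basis (WTerm n m) K E) (f : E) (t : WTerm n m) : Prop :=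
  B.repr f t ≠ 0 ∧ ∀ t', B.repr f t' ≠ 0 → t' = t ∨ termLtD t' t

/-- `f` is `(x,∂)`-reduced with respect to `g`: `f` contains no multiple
`θ u_g` of `u_g` with `ord_∂(θ v_g) ≤ ord_∂ v_f`. -/
def IsXDReducedWrt (B : Module.Basis (WTerm n m) K E) (f g : E) : Prop :=
  ∀ w u v vf, B.repr f w ≠ 0 → IsXLeader B g u → IsDLeader B g v →
    IsDLeader B f vf → termDvd u w →
    ¬ (ordD (termQuot w u) + ordD v.1 ≤ ordD vf.1)

/-- `G` is an `(x,∂)`-Gröbner basis of the submodule `N`: the `G i` are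
nonzero elements of `N` and for every nonzero `f ∈ N` there is `i` with
`ρ(G i) ∣ ρ(f)`, i.e. `u_{G i} ∣ u_f` and `d(G i) ≤ d(f)` where
`d(h) = ord_∂ v_h − ord_∂ u_h`. -/
def IsXDGroebnerBasis (B : Module.Basis (WTerm n m) K E) {r : ℕ} (G : Fin r → E)
    (N : Submodule (WeylAlgebra K n) E) : Prop :=
  (∀ i, G i ≠ 0) ∧ (∀ i, G i ∈ N) ∧
  ∀ f ∈ N, f ≠ 0 → ∃ (i : Fin r) (uf vf ui vi : WTerm n m),
    IsXLeader B f uf ∧ IsDLeader B f vf ∧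
    IsXLeader B (G i) ui ∧ IsDLeader B (G i) vi ∧
    termDvd ui uf ∧
    (ordD vi.1 : ℤ) - (ordD ui.1 : ℤ) ≤ (ordD vf.1 : ℤ) - (ordD uf.1 : ℤ)

/-- One step of `(x,∂)`-reduction of `f` modulo `g`, producing `h`. -/
def XDReducesOneStep (B : Module.Basis (WTerm n m) K E) (g f h : E) : Prop :=
  ∃ (w u v vf : WTerm n m),
    B.repr f w ≠ 0 ∧ IsXLeader B g u ∧ IsDLeader B g v ∧ IsDLeader B f vf ∧
    termDvd u w ∧ ordD (termQuot w u) + ordD v.1 ≤ ordD vf.1 ∧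
    h = f - (B.repr f w * (B.repr g u)⁻¹) • (wMonOf K n (termQuot w u) • g)

/-- `f` `(x,∂)`-reduces to `h` modulo the finite family `G`. -/
def XDReducesTo (B : Module.Basis (WTerm n m) K E) {r : ℕ} (G : Fin r → E) (f h : E) : Prop :=
  Relation.ReflTransGen (fun f' h' => ∃ i, XDReducesOneStep B (G i) f' h') f h

/-- `S` is the `x`-`S`-polynomial `S_x(f, g)`. -/
def IsSPolyX (B : Module.Basis (WTerm n m) K E) (f g S : E) : Prop :=
  ∃ uf ug : WTerm n m, IsXLeader B f uf ∧ IsXLeader B g ug ∧ uf.2 = ug.2 ∧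
    S = (B.repr f uf)⁻¹ • (wMonOf K n (monQuot (monLcm uf.1 ug.1) uf.1) • f) -
        (B.repr g ug)⁻¹ • (wMonOf K n (monQuot (monLcm uf.1 ug.1) ug.1) • g)

/-- `G` is a Gröbner basis of `N` with respect to the term order `<_∂`
(the usual notion): the `G i` are nonzero elements of `N`, and the `∂`-leader
of every nonzero `f ∈ N` is a multiple of some `v_{G i}`. -/
def IsDGroebnerBasis (B : Module.Basis (WTerm n m) K E) {r : ℕ} (G : Fin r → E)
    (N : Submodule (WeylAlgebra K n) E) : Prop :=
  (∀ i, G i ≠ 0) ∧ (∀ i, G i ∈ N) ∧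
  ∀ f ∈ N, f ≠ 0 → ∃ (i : Fin r) (vf vi : WTerm n m),
    IsDLeader B f vf ∧ IsDLeader B (G i) vi ∧ termDvd vi vf

end Groebner

section AuxOrder

variable {n m : ℕ}

/-- Lexicographic key for the order `<ₓ`. -/
abbrev WKey (n m : ℕ) := ℕ ×ₗ (ℕ ×ₗ ((Lex (Fin n → ℕ)) ×ₗ ((Lex (Fin n → ℕ)) ×ₗ Fin m)))

noncomputable instance wkeyLO (n m : ℕ) : LinearOrder (WKey n m) := by
  haveI : WellFoundedLT (Fin n) := inferInstance
  infer_instance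

def embX (t : WTerm n m) : WKey n m :=
  toLex (ordX t.1, toLex (ordD t.1, toLex (toLex t.1.1, toLex (toLex t.1.2, t.2))))

def embD (t : WTerm n m) : WKey n m :=
  toLex (ordD t.1, toLex (ordX t.1, toLex (toLex t.1.2, toLex (toLex t.1.1, t.2))))

lemma lexLt_iff {f g : Fin n → ℕ} : lexLt f g ↔ toLex f < toLex g := Iff.rfl

lemma termLtX_iff {t t' : WTerm n m} : termLtX t t' ↔ embX t < embX t' := by
  simp only [termLtX, monLtX, embX, Prod.Lex.lt_iff, lexLt_iff, toLex_inj]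
  constructor
  · rintro (h | ⟨h1, h2⟩)
    · tauto
    · exact Or.inr ⟨by rw [h1]; rfl, Or.inr ⟨by rw [h1]; rfl, Or.inr ⟨by rw [h1]; rfl, Or.inr ⟨by rw [h1]; rfl, h2⟩⟩⟩⟩
  · rintro (h | ⟨e1, (h | ⟨e2, (h | ⟨e3, (h | ⟨e4, h⟩)⟩)⟩)⟩)
    · exact Or.inl (Or.inl h)
    · exact Or.inl (Or.inr ⟨e1, Or.inl h⟩)
    · exact Or.inl (Or.inr ⟨e1, Or.inr ⟨e2, Or.inl h⟩⟩)
    · exact Or.inl (Or.inr ⟨e1, Or.inr ⟨e2, Or.inr ⟨e3, h⟩⟩⟩)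
    · exact Or.inr ⟨Prod.ext e3 e4, h⟩

lemma termLtD_iff {t t' : WTerm n m} : termLtD t t' ↔ embD t < embD t' := by
  simp only [termLtD, monLtD, embD, Prod.Lex.lt_iff, lexLt_iff, toLex_inj]
  constructor
  · rintro (h | ⟨h1, h2⟩)
    · tauto
    · exact Or.inr ⟨by rw [h1]; rfl, Or.inr ⟨by rw [h1]; rfl, Or.inr ⟨by rw [h1]; rfl, Or.inr ⟨by rw [h1]; rfl, h2⟩⟩⟩⟩
  · rintro (h | ⟨e1, (h | ⟨e2, (h | ⟨e3, (h | ⟨e4, h⟩)⟩)⟩)⟩)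
    · exact Or.inl (Or.inl h)
    · exact Or.inl (Or.inr ⟨e1, Or.inl h⟩)
    · exact Or.inl (Or.inr ⟨e1, Or.inr ⟨e2, Or.inl h⟩⟩)
    · exact Or.inl (Or.inr ⟨e1, Or.inr ⟨e2, Or.inr ⟨e3, h⟩⟩⟩)
    · exact Or.inr ⟨Prod.ext e4 e3, h⟩

lemma embX_inj : Function.Injective (embX (n := n) (m := m)) := by
  intro t t' h
  simp only [embX, toLex_inj, Prod.mk.injEq] at h
  obtain ⟨-, -, h1, h2, h3⟩ := h
  exact Prod.ext (Prod.ext h1 h2) h3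

lemma embD_inj : Function.Injective (embD (n := n) (m := m)) := by
  intro t t' h
  simp only [embD, toLex_inj, Prod.mk.injEq] at h
  obtain ⟨-, -, h1, h2, h3⟩ := h
  exact Prod.ext (Prod.ext h2 h1) h3

lemma termLtX_ordX_le {t t' : WTerm n m} (h : termLtX t t') : ordX t.1 ≤ ordX t'.1 := by
  rcases h with ((h | h) | ⟨h, -⟩)
  · exact h.le
  · exact h.1.le
  · exact le_of_eq (by rw [h])

lemma termLtX_ordD_le_of_ordX_eq {t t' : WTerm n m} (h : termLtX t t')
    (he : ordX t.1 = ordX t'.1) : ordD t.1 ≤ ordD t'.1 := by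
  rcases h with ((h | h) | ⟨h, -⟩)
  · omega
  · rcases h.2 with (h2 | h2) <;> [exact h2.le; exact le_of_eq (by rw [h2.1])]
  · exact le_of_eq (by rw [h])

lemma termLtD_ordD_le {t t' : WTerm n m} (h : termLtD t t') : ordD t.1 ≤ ordD t'.1 := by
  rcases h with ((h | h) | ⟨h, -⟩)
  · exact h.le
  · exact h.1.le
  · exact le_of_eq (by rw [h])

lemma sum_pi_single_one (i : Fin n) : ∑ k, (Pi.single i 1 : Fin n → ℕ) k = 1 := by
  simp [Pi.single_apply]

lemma sum_add' (a b : Fin n → ℕ) : ∑ k, (a + b) k = (∑ k, a k) + ∑ k, b k := by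
  simp [Finset.sum_add_distrib]

lemma sum_sub_single_le (a : Fin n → ℕ) (i : Fin n) :
    ∑ k, (a - Pi.single i 1 : Fin n → ℕ) k ≤ ∑ k, a k :=
  Finset.sum_le_sum fun k _ => Nat.sub_le _ _

lemma sum_sub_single_lt (a : Fin n → ℕ) (i : Fin n) (h : a i ≠ 0) :
    ∑ k, (a - Pi.single i 1 : Fin n → ℕ) k < ∑ k, a k := by
  refine Finset.sum_lt_sum (fun k _ => Nat.sub_le _ _) ⟨i, Finset.mem_univ i, ?_⟩
  simp only [Pi.sub_apply, Pi.single_eq_same]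
  omega

lemma ordX_monMul (a b : WMon n) : ordX (monMul a b) = ordX a + ordX b := sum_add' _ _

lemma ordD_monMul (a b : WMon n) : ordD (monMul a b) = ordD a + ordD b := sum_add' _ _

lemma ordD_quot_add {θ θ' : WMon n} (h : monDvd θ θ') :
    ordD (monQuot θ' θ) + ordD θ = ordD θ' := by
  unfold ordD monQuot
  rw [← Finset.sum_add_distrib]
  exact Finset.sum_congr rfl fun i _ => Nat.sub_add_cancel (h.2 i)

lemma termMulMon_quot {u w : WTerm n m} (h : termDvd u w) :
    termMulMon (termQuot w u) u = w := by
  obtain ⟨h1, h2⟩ := h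
  refine Prod.ext (Prod.ext ?_ ?_) h1 <;>
    · funext i
      exact Nat.sub_add_cancel (by first | exact h2.1 i | exact h2.2 i)

lemma lexLt_add_left {a f g : Fin n → ℕ} (h : lexLt f g) : lexLt (a + f) (a + g) := by
  obtain ⟨i, h1, h2⟩ := h
  exact ⟨i, fun j hj => by simp [h1 j hj], by simpa using h2⟩

lemma monLtX_monMul {θ : WMon n} {a b : WMon n} (h : monLtX a b) :
    monLtX (monMul θ a) (monMul θ b) := by
  unfold monLtX at h ⊢
  rw [ordX_monMul, ordX_monMul, ordD_monMul, ordD_monMul]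
  rcases h with (h | ⟨e1, (h | ⟨e2, (h | ⟨e3, h⟩)⟩)⟩)
  · exact Or.inl (by omega)
  · exact Or.inr ⟨by omega, Or.inl (by omega)⟩
  · exact Or.inr ⟨by omega, Or.inr ⟨by omega, Or.inl (lexLt_add_left h)⟩⟩
  · exact Or.inr ⟨by omega, Or.inr ⟨by omega, Or.inr ⟨by simp only [monMul]; rw [e3], lexLt_add_left h⟩⟩⟩

lemma termLtX_termMulMon {θ : WMon n} {t t' : WTerm n m} (h : termLtX t t') :
    termLtX (termMulMon θ t) (termMulMon θ t') := by
  rcases h with (h | ⟨h1, h2⟩)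
  · exact Or.inl (monLtX_monMul h)
  · exact Or.inr ⟨by rw [termMulMon, termMulMon, h1], h2⟩

end AuxOrder

section AuxProd

variable {A : Type*} [Monoid A]

lemma prod_ofFn_pow_add : ∀ {n : ℕ} (g : Fin n → A), (∀ i j, Commute (g i) (g j)) →
    ∀ (a b : Fin n → ℕ),
    (List.ofFn fun i => g i ^ (a i + b i)).prod
      = (List.ofFn fun i => g i ^ a i).prod * (List.ofFn fun i => g i ^ b i).prod := by
  intro n
  induction n with
  | zero => intro g hg a b; simp
  | succ n ih =>
    intro g hg a b
    rw [List.ofFn_succ, List.ofFn_succ, List.ofFn_succ]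
    simp only [List.prod_cons]
    rw [ih (fun i => g i.succ) (fun i j => hg _ _) (fun i => a i.succ) (fun i => b i.succ),
      pow_add]
    have hc : Commute (g 0 ^ b 0) ((List.ofFn fun i : Fin n => g i.succ ^ a i.succ).prod) := by
      apply Commute.list_prod_right
      intro x hx
      obtain ⟨i, rfl⟩ := List.mem_ofFn.mp hx
      exact (hg 0 i.succ).pow_pow _ _
    rw [hc.mul_mul_mul_comm]

lemma prod_ofFn_pow_single : ∀ {n : ℕ} (g : Fin n → A) (i : Fin n),
    (List.ofFn fun k => g k ^ (Pi.single i 1 : Fin n → ℕ) k).prod = g i := by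
  intro n
  induction n with
  | zero => intro g i; exact absurd i.2 (by omega)
  | succ n ih =>
    intro g i
    rw [List.ofFn_succ]
    cases i using Fin.cases with
    | zero =>
      rw [List.prod_cons]
      have h1 : ∀ k : Fin n, (Pi.single (0 : Fin (n+1)) 1 : Fin (n+1) → ℕ) k.succ = 0 :=
        fun k => Pi.single_eq_of_ne (Fin.succ_ne_zero k) 1
      have : (List.ofFn fun k : Fin n => g k.succ ^ (Pi.single (0 : Fin (n+1)) 1 :
          Fin (n+1) → ℕ) k.succ).prod = 1 := by
        apply List.prod_eq_one
        intro x hx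
        obtain ⟨k, rfl⟩ := List.mem_ofFn.mp hx
        simp only [h1, pow_zero]
      rw [this, mul_one, Pi.single_eq_same, pow_one]
    | succ j =>
      rw [List.prod_cons]
      have h0 : (Pi.single (j.succ : Fin (n+1)) 1 : Fin (n+1) → ℕ) 0 = 0 :=
        Pi.single_eq_of_ne (Fin.succ_ne_zero j).symm 1
      have h1 : ∀ k : Fin n, (Pi.single (j.succ : Fin (n+1)) 1 : Fin (n+1) → ℕ) k.succ
          = (Pi.single j 1 : Fin n → ℕ) k := by
        intro k
        by_cases hk : k = j
        · subst hk; rw [Pi.single_eq_same, Pi.single_eq_same]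
        · rw [Pi.single_eq_of_ne (fun h => hk (Fin.succ_injective n h)) 1,
            Pi.single_eq_of_ne hk 1]
      rw [h0, pow_zero, one_mul]
      have : (List.ofFn fun k : Fin n => g k.succ ^ (Pi.single (j.succ : Fin (n+1)) 1 :
          Fin (n+1) → ℕ) k.succ) = List.ofFn fun k : Fin n => g k.succ ^
            (Pi.single j 1 : Fin n → ℕ) k := by
        congr 1; funext k; rw [h1 k]
      rw [this, ih (fun k => g k.succ) j]

end AuxProd

section AuxOp

variable (K : Type*) [Field K] (n : ℕ)

open MvPolynomial

/-- The polynomial `x^α`. -/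
noncomputable def xp (α : Fin n → ℕ) : MvPolynomial (Fin n) K := ∏ i, X i ^ α i

/-- The operator `∂^β`. -/
noncomputable def ppr (β : Fin n → ℕ) : Module.End K (MvPolynomial (Fin n) K) :=
  (List.ofFn fun i => pdOp K n i ^ β i).prod

lemma pdOp_comm (i j : Fin n) : Commute (pdOp K n i) (pdOp K n j) := by
  unfold pdOp
  rcases eq_or_ne i j with rfl | hij
  · rfl
  · apply LinearMap.ext
    intro p
    induction p using MvPolynomial.induction_on' with
    | monomial s a =>
      simp only [Module.End.mul_apply, LinearMap.coe_mk, Derivation.coeFn_coe,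
        pderiv_monomial]
      rw [Finsupp.tsub_apply, Finsupp.tsub_apply,
        Finsupp.single_eq_of_ne hij, Finsupp.single_eq_of_ne hij.symm]
      have : s - Finsupp.single j 1 - Finsupp.single i 1
          = s - Finsupp.single i 1 - Finsupp.single j 1 := by
        rw [tsub_tsub, tsub_tsub, add_comm]
      rw [this, Nat.sub_zero, Nat.sub_zero]
      ring_nf
    | add p q hp hq =>
      simp only [Module.End.mul_apply, map_add] at hp hq ⊢
      rw [hp, hq]

lemma ppr_add (a b : Fin n → ℕ) : ppr K n (a + b) = ppr K n a * ppr K n b := by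
  unfold ppr
  exact prod_ofFn_pow_add _ (pdOp_comm K n) a b

lemma ppr_zero : ppr K n 0 = 1 := by
  unfold ppr
  apply List.prod_eq_one
  intro x hx
  obtain ⟨i, rfl⟩ := List.mem_ofFn.mp hx
  exact pow_zero _

lemma ppr_single (i : Fin n) : ppr K n (Pi.single i 1) = pdOp K n i :=
  prod_ofFn_pow_single _ i

lemma xp_add (a b : Fin n → ℕ) : xp K n (a + b) = xp K n a * xp K n b := by
  unfold xp
  rw [← Finset.prod_mul_distrib]
  exact Finset.prod_congr rfl fun i _ => by rw [Pi.add_apply, pow_add]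

lemma xp_zero : xp K n 0 = 1 := by
  unfold xp; simp

lemma xp_single (i : Fin n) : xp K n (Pi.single i 1) = X i := by
  unfold xp
  rw [Finset.prod_eq_single i (fun k _ hk => by rw [Pi.single_eq_of_ne hk, pow_zero])
    (fun h => absurd (Finset.mem_univ i) h)]
  rw [Pi.single_eq_same, pow_one]

lemma mulLeft_mul' (p q : MvPolynomial (Fin n) K) :
    LinearMap.mulLeft K (p * q) = LinearMap.mulLeft K p * LinearMap.mulLeft K q := by
  apply LinearMap.ext
  intro r
  simp [Module.End.mul_apply, mul_assoc]

lemma mulLeft_one' : LinearMap.mulLeft K (1 : MvPolynomial (Fin n) K) = 1 := by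
  apply LinearMap.ext
  intro r
  simp [Module.End.one_apply]

/-- Multiplication operators as a monoid hom. -/
noncomputable def mulLeftHom : MvPolynomial (Fin n) K →* Module.End K (MvPolynomial (Fin n) K) where
  toFun := LinearMap.mulLeft K
  map_one' := mulLeft_one' K n
  map_mul' := mulLeft_mul' K n

lemma xlist_eq (α : Fin n → ℕ) :
    (List.ofFn fun i => mulX K n i ^ α i).prod = LinearMap.mulLeft K (xp K n α) := by
  have h : (List.ofFn fun i => mulX K n i ^ α i)
      = List.map (mulLeftHom K n) (List.ofFn fun i => X i ^ α i) := by
    rw [List.map_ofFn]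
    congr 1
    funext i
    show mulX K n i ^ α i = mulLeftHom K n (X i ^ α i)
    rw [map_pow]
    rfl
  rw [h, ← map_list_prod (mulLeftHom K n), List.prod_ofFn]
  rfl

lemma wMonEnd_eq (α β : Fin n → ℕ) :
    wMonEnd K n α β = LinearMap.mulLeft K (xp K n α) * ppr K n β := by
  unfold wMonEnd ppr
  rw [xlist_eq]

lemma wMonEnd_split (α β : Fin n → ℕ) :
    wMonEnd K n α β = wMonEnd K n α 0 * wMonEnd K n 0 β := by
  rw [wMonEnd_eq, wMonEnd_eq, wMonEnd_eq, ppr_zero, xp_zero, mulLeft_one', mul_one, one_mul]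

lemma wMonEnd_zero : wMonEnd K n 0 0 = 1 := by
  rw [wMonEnd_eq, ppr_zero, xp_zero, mulLeft_one', mul_one]

lemma pderiv_xp (i : Fin n) (α : Fin n → ℕ) :
    pderiv i (xp K n α) = (α i : MvPolynomial (Fin n) K) * xp K n (α - Pi.single i 1) := by
  classical
  have hrest : ∀ s : Finset (Fin n), i ∉ s → pderiv i (∏ k ∈ s, (X k : MvPolynomial (Fin n) K) ^ α k) = 0 := by
    intro s
    induction s using Finset.induction_on with
    | empty => intro _; simp
    | @insert a s ha ih =>
      intro hi
      have hai : a ≠ i := fun h => hi (h ▸ Finset.mem_insert_self a s)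
      rw [Finset.prod_insert ha, pderiv_mul, ih (fun h => hi (Finset.mem_insert_of_mem h)),
        mul_zero, add_zero, pderiv_pow, pderiv_X_of_ne hai, mul_zero, zero_mul]
  have hmain : xp K n α = X i ^ α i * ∏ k ∈ Finset.univ.erase i, (X k : MvPolynomial (Fin n) K) ^ α k :=
    (Finset.mul_prod_erase Finset.univ (fun k => (X k : MvPolynomial (Fin n) K) ^ α k)
      (Finset.mem_univ i)).symm
  rw [hmain, pderiv_mul, hrest _ (Finset.notMem_erase i _), mul_zero, add_zero,
    pderiv_pow, pderiv_X_self, mul_one]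
  have hxp : xp K n (α - Pi.single i 1)
      = X i ^ (α i - 1) * ∏ k ∈ Finset.univ.erase i, (X k : MvPolynomial (Fin n) K) ^ α k := by
    unfold xp
    rw [← Finset.mul_prod_erase Finset.univ _ (Finset.mem_univ i)]
    congr 1
    · rw [Pi.sub_apply, Pi.single_eq_same]
    · exact Finset.prod_congr rfl fun k hk => by
        rw [Pi.sub_apply, Pi.single_eq_of_ne (Finset.mem_erase.mp hk).1, Nat.sub_zero]
  rw [hxp]
  ring

lemma pd_mulLeft (i : Fin n) (p : MvPolynomial (Fin n) K) :
    pdOp K n i * LinearMap.mulLeft K p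
      = LinearMap.mulLeft K p * pdOp K n i + LinearMap.mulLeft K (pderiv i p) := by
  apply LinearMap.ext
  intro q
  simp only [Module.End.mul_apply, LinearMap.add_apply, LinearMap.mulLeft_apply, pdOp,
    Derivation.coeFn_coe, LinearMap.coe_mk]
  rw [pderiv_mul]
  ring

lemma opX (i : Fin n) (α β : Fin n → ℕ) :
    wMonEnd K n (Pi.single i 1) 0 * wMonEnd K n α β = wMonEnd K n (Pi.single i 1 + α) β := by
  rw [wMonEnd_eq, wMonEnd_eq, wMonEnd_eq, ppr_zero, mul_one, xp_add, mulLeft_mul', mul_assoc]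

lemma opD (i : Fin n) (α β : Fin n → ℕ) :
    wMonEnd K n 0 (Pi.single i 1) * wMonEnd K n α β
      = wMonEnd K n α (Pi.single i 1 + β)
        + (α i : K) • wMonEnd K n (α - Pi.single i 1) β := by
  rw [wMonEnd_eq, wMonEnd_eq, wMonEnd_eq, wMonEnd_eq, xp_zero, mulLeft_one', one_mul,
    ppr_single, ppr_add, ppr_single]
  rw [← mul_assoc, pd_mulLeft, add_mul, mul_assoc, ← mul_assoc, pderiv_xp]
  congr 1
  have : LinearMap.mulLeft K ((α i : MvPolynomial (Fin n) K) * xp K n (α - Pi.single i 1))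
      = (α i : K) • LinearMap.mulLeft K (xp K n (α - Pi.single i 1)) := by
    apply LinearMap.ext
    intro q
    rw [LinearMap.smul_apply, LinearMap.mulLeft_apply, LinearMap.mulLeft_apply,
      Algebra.smul_def, map_natCast, mul_assoc]
  rw [this, smul_mul_assoc]

end AuxOp

section AuxWeyl

variable (K : Type*) [Field K] (n : ℕ)

lemma wMonOf_mk (a b : Fin n → ℕ) : wMonOf K n (a, b) = wMon K n a b := rfl

lemma wMon_X_mul (i : Fin n) (α β : Fin n → ℕ) :
    wMon K n (Pi.single i 1) 0 * wMon K n α β = wMon K n (Pi.single i 1 + α) β :=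
  Subtype.ext (opX K n i α β)

lemma wMon_D_mul (i : Fin n) (α β : Fin n → ℕ) :
    wMon K n 0 (Pi.single i 1) * wMon K n α β
      = wMon K n α (Pi.single i 1 + β) + (α i : K) • wMon K n (α - Pi.single i 1) β := by
  apply Subtype.ext
  push_cast
  exact opD K n i α β

lemma wMon_zero_one : wMon K n 0 0 = 1 := by
  apply Subtype.ext
  show wMonEnd K n 0 0 = ((1 : WeylAlgebra K n) : _)
  rw [wMonEnd_zero]
  rfl

lemma wMon_split (θ : WMon n) :
    wMonOf K n θ = wMon K n θ.1 0 * wMon K n 0 θ.2 := by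
  apply Subtype.ext
  show wMonEnd K n θ.1 θ.2 = wMonEnd K n θ.1 0 * wMonEnd K n 0 θ.2
  exact wMonEnd_split K n θ.1 θ.2

lemma wMon_D_add (a b : Fin n → ℕ) :
    wMon K n 0 (a + b) = wMon K n 0 a * wMon K n 0 b := by
  apply Subtype.ext
  show wMonEnd K n 0 (a + b) = wMonEnd K n 0 a * wMonEnd K n 0 b
  rw [wMonEnd_eq, wMonEnd_eq, wMonEnd_eq, xp_zero, mulLeft_one', one_mul, one_mul, one_mul,
    ppr_add]

lemma wMon_X_add (a b : Fin n → ℕ) :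
    wMon K n (a + b) 0 = wMon K n a 0 * wMon K n b 0 := by
  apply Subtype.ext
  show wMonEnd K n (a + b) 0 = wMonEnd K n a 0 * wMonEnd K n b 0
  rw [wMonEnd_eq, wMonEnd_eq, wMonEnd_eq, ppr_zero, mul_one, mul_one, mul_one, xp_add,
    mulLeft_mul']

end AuxWeyl

/-- The error terms: terms with `j`-th basis vector and strictly smaller orders. -/
def errSet {n : ℕ} (m : ℕ) (N1 N2 : ℕ) (j : Fin m) : Set (WTerm n m) :=
  {t | t.2 = j ∧ ordX t.1 < N1 ∧ ordD t.1 < N2}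

section AuxMod

variable {K : Type*} [Field K] [CharZero K] {n m : ℕ}
variable {E : Type*} [AddCommGroup E] [Module (WeylAlgebra K n) E]
  [Module K E] [IsScalarTower K (WeylAlgebra K n) E]

lemma wa_smul_comm (a : WeylAlgebra K n) (k : K) (x : E) : a • k • x = k • a • x := by
  rw [← algebraMap_smul (WeylAlgebra K n) k x, ← mul_smul, ← Algebra.commutes, mul_smul,
    algebraMap_smul]

lemma wa_smul_span_le (a : WeylAlgebra K n) {S T : Set E}
    (h : ∀ x ∈ S, a • x ∈ Submodule.span K T) :
    ∀ y ∈ Submodule.span K S, a • y ∈ Submodule.span K T := by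
  intro y hy
  induction hy using Submodule.span_induction with
  | mem x hx => exact h x hx
  | zero => rw [smul_zero]; exact Submodule.zero_mem _
  | add x y _ _ hx hy => rw [smul_add]; exact Submodule.add_mem _ hx hy
  | smul k x _ hx => rw [wa_smul_comm]; exact Submodule.smul_mem _ _ hx

variable (B : Module.Basis (WTerm n m) K E)

lemma exists_isXLeader {f : E} (hf : f ≠ 0) : ∃ t, IsXLeader B f t := by
  have hr : B.repr f ≠ 0 := fun h => hf (by simpa using B.repr.map_eq_zero_iff.mp h)
  obtain ⟨t, ht, hmax⟩ := Finset.exists_max_image ((B.repr f).support) embX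
    (Finsupp.support_nonempty_iff.mpr hr)
  refine ⟨t, Finsupp.mem_support_iff.mp ht, fun t' h' => ?_⟩
  rcases lt_or_eq_of_le (hmax t' (Finsupp.mem_support_iff.mpr h')) with h | h
  · exact Or.inr (termLtX_iff.mpr h)
  · exact Or.inl (embX_inj h)

lemma exists_isDLeader {f : E} (hf : f ≠ 0) : ∃ t, IsDLeader B f t := by
  have hr : B.repr f ≠ 0 := fun h => hf (by simpa using B.repr.map_eq_zero_iff.mp h)
  obtain ⟨t, ht, hmax⟩ := Finset.exists_max_image ((B.repr f).support) embD
    (Finsupp.support_nonempty_iff.mpr hr)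
  refine ⟨t, Finsupp.mem_support_iff.mp ht, fun t' h' => ?_⟩
  rcases lt_or_eq_of_le (hmax t' (Finsupp.mem_support_iff.mpr h')) with h | h
  · exact Or.inr (termLtD_iff.mpr h)
  · exact Or.inl (embD_inj h)

variable (hB : ∀ (θ : WMon n) (j : Fin m), B (θ, j) = wMonOf K n θ • B ((0 : WMon n), j))

include hB

lemma smul_basis_X (i : Fin n) (α β : Fin n → ℕ) (j : Fin m) :
    wMon K n (Pi.single i 1) 0 • B ((α, β), j) = B ((Pi.single i 1 + α, β), j) := by
  rw [hB (α, β) j, hB (Pi.single i 1 + α, β) j, wMonOf_mk, wMonOf_mk, ← mul_smul, wMon_X_mul]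

lemma smul_basis_D (i : Fin n) (α β : Fin n → ℕ) (j : Fin m) :
    wMon K n 0 (Pi.single i 1) • B ((α, β), j)
      = B ((α, Pi.single i 1 + β), j) + (α i : K) • B ((α - Pi.single i 1, β), j) := by
  rw [hB (α, β) j, hB (α, Pi.single i 1 + β) j, hB (α - Pi.single i 1, β) j,
    wMonOf_mk, wMonOf_mk, wMonOf_mk, ← mul_smul, wMon_D_mul, add_smul, smul_assoc]

lemma exp_x : ∀ (N : ℕ) (a α β : Fin n → ℕ) (j : Fin m), (∑ i, a i) = N →
    wMon K n a 0 • B ((α, β), j) = B ((a + α, β), j) := by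
  intro N
  induction N with
  | zero =>
    intro a α β j ha
    have ha0 : a = 0 := funext fun i => (Finset.sum_eq_zero_iff.mp ha) i (Finset.mem_univ i)
    subst ha0
    rw [wMon_zero_one, one_smul, zero_add]
  | succ N ih =>
    intro a α β j ha
    have hex : ∃ i, a i ≠ 0 := by
      by_contra hc
      push_neg at hc
      rw [Finset.sum_eq_zero (fun i _ => hc i)] at ha
      omega
    obtain ⟨i, hi⟩ := hex
    set a' : Fin n → ℕ := a - Pi.single i 1 with ha'def
    have hbd : a = Pi.single i 1 + a' := by
      funext k
      by_cases hk : k = i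
      · subst hk
        simp only [ha'def, Pi.add_apply, Pi.sub_apply, Pi.single_eq_same]
        omega
      · simp only [ha'def, Pi.add_apply, Pi.sub_apply, Pi.single_eq_of_ne hk]
        omega
    have hsum' : (∑ k, a' k) = N := by
      rw [hbd, sum_add', sum_pi_single_one] at ha
      omega
    have h1 : wMon K n a 0 = wMon K n (Pi.single i 1) 0 * wMon K n a' 0 := by
      rw [← wMon_X_add, ← hbd]
    rw [h1, mul_smul, ih a' α β j hsum', smul_basis_X B hB]
    rw [← add_assoc, ← hbd]

lemma exp_d : ∀ (N : ℕ) (b α β : Fin n → ℕ) (j : Fin m), (∑ i, b i) = N →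
    wMon K n 0 b • B ((α, β), j) - B ((α, b + β), j) ∈
      Submodule.span K (B '' errSet m (∑ i, α i) (∑ i, (b + β) i) j) := by
  intro N
  induction N with
  | zero =>
    intro b α β j hb
    have hb0 : b = 0 := funext fun i => (Finset.sum_eq_zero_iff.mp hb) i (Finset.mem_univ i)
    subst hb0
    rw [wMon_zero_one, one_smul, zero_add, sub_self]
    exact Submodule.zero_mem _
  | succ N ih =>
    intro b α β j hb
    have hex : ∃ i, b i ≠ 0 := by
      by_contra hc
      push_neg at hc
      rw [Finset.sum_eq_zero (fun i _ => hc i)] at hb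
      omega
    obtain ⟨i, hi⟩ := hex
    set b' : Fin n → ℕ := b - Pi.single i 1 with hb'def
    have hbd : b = Pi.single i 1 + b' := by
      funext k
      by_cases hk : k = i
      · subst hk
        simp only [hb'def, Pi.add_apply, Pi.sub_apply, Pi.single_eq_same]
        omega
      · simp only [hb'def, Pi.add_apply, Pi.sub_apply, Pi.single_eq_of_ne hk]
        omega
    have hsum' : (∑ k, b' k) = N := by
      rw [hbd, sum_add', sum_pi_single_one] at hb
      omega
    have hs1 : ∑ k, (b' + β) k = N + ∑ k, β k := by rw [sum_add', hsum']
    have hs2 : ∑ k, (b + β) k = (N + 1) + ∑ k, β k := by rw [sum_add', hb]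
    have hmem := ih b' α β j hsum'
    have hsplit : wMon K n 0 b • B ((α, β), j)
        = wMon K n 0 (Pi.single i 1) • B ((α, b' + β), j)
          + wMon K n 0 (Pi.single i 1) •
            (wMon K n 0 b' • B ((α, β), j) - B ((α, b' + β), j)) := by
      rw [← smul_add, add_sub_cancel, ← mul_smul, ← wMon_D_add, ← hbd]
    rw [hsplit, smul_basis_D B hB]
    have harr : Pi.single i 1 + (b' + β) = b + β := by rw [hbd, add_assoc]
    rw [harr]
    have hgoal : B ((α, b + β), j) + (α i : K) • B ((α - Pi.single i 1, b' + β), j)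
          + wMon K n 0 (Pi.single i 1) •
            (wMon K n 0 b' • B ((α, β), j) - B ((α, b' + β), j))
          - B ((α, b + β), j)
        = (α i : K) • B ((α - Pi.single i 1, b' + β), j)
          + wMon K n 0 (Pi.single i 1) •
            (wMon K n 0 b' • B ((α, β), j) - B ((α, b' + β), j)) := by
      abel
    rw [hgoal]
    apply Submodule.add_mem
    · by_cases hα : α i = 0
      · rw [hα, Nat.cast_zero, zero_smul]
        exact Submodule.zero_mem _
      · refine Submodule.smul_mem _ _ (Submodule.subset_span
          ⟨((α - Pi.single i 1, b' + β), j), ⟨rfl, ?_, ?_⟩, rfl⟩)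
        · exact sum_sub_single_lt α i hα
        · show (∑ k, (b' + β) k) < ∑ k, (b + β) k
          omega
    · refine wa_smul_span_le _ (fun x hx => ?_) _ hmem
      obtain ⟨⟨⟨a1, a2⟩, j'⟩, ⟨hj, h1, h2⟩, rfl⟩ := hx
      have h2' : (∑ k, a2 k) < N + ∑ k, β k := by
        rw [← hs1]; exact h2
      rw [smul_basis_D B hB]
      apply Submodule.add_mem
      · refine Submodule.subset_span ⟨((a1, Pi.single i 1 + a2), j'), ⟨hj, h1, ?_⟩, rfl⟩
        show (∑ k, ((Pi.single i 1 : Fin n → ℕ) + a2) k) < ∑ k, (b + β) k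
        rw [sum_add', sum_pi_single_one]
        omega
      · refine Submodule.smul_mem _ _ (Submodule.subset_span
          ⟨((a1 - Pi.single i 1, a2), j'), ⟨hj, ?_, ?_⟩, rfl⟩)
        · exact lt_of_le_of_lt (sum_sub_single_le a1 i) h1
        · show (∑ k, a2 k) < ∑ k, (b + β) k
          omega

lemma exp_full (θ : WMon n) (α β : Fin n → ℕ) (j : Fin m) :
    wMonOf K n θ • B ((α, β), j) - B ((θ.1 + α, θ.2 + β), j) ∈
      Submodule.span K (B '' errSet m (∑ i, (θ.1 + α) i) (∑ i, (θ.2 + β) i) j) := by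
  rw [wMon_split, mul_smul]
  have hd := exp_d B hB (∑ i, θ.2 i) θ.2 α β j rfl
  have hsplit : wMon K n θ.1 0 • (wMon K n 0 θ.2 • B ((α, β), j))
      = B ((θ.1 + α, θ.2 + β), j)
        + wMon K n θ.1 0 • (wMon K n 0 θ.2 • B ((α, β), j) - B ((α, θ.2 + β), j)) := by
    rw [smul_sub, exp_x B hB (∑ i, θ.1 i) θ.1 α (θ.2 + β) j rfl]
    abel
  rw [hsplit, add_sub_cancel_left]
  refine wa_smul_span_le _ (fun x hx => ?_) _ hd
  obtain ⟨⟨⟨a1, a2⟩, j'⟩, ⟨hj, h1, h2⟩, rfl⟩ := hx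
  rw [exp_x B hB (∑ i, θ.1 i) θ.1 a1 a2 j' rfl]
  refine Submodule.subset_span ⟨((θ.1 + a1, a2), j'), ⟨hj, ?_, ?_⟩, rfl⟩
  · show (∑ k, (θ.1 + a1) k) < ∑ k, (θ.1 + α) k
    rw [sum_add', sum_add']
    have h1' : (∑ k, a1 k) < ∑ k, α k := h1
    omega
  · show (∑ k, a2 k) < ∑ k, (θ.2 + β) k
    exact h2

end AuxMod

/-- (Theorem 5.3.) Let `M` be generated by `f₁,…,f_m` over
`Aₙ(K)`, `π : E → M` the natural epimorphism from the free module `E` with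
`π(eⱼ) = fⱼ`, `N = ker π`, and `G = {g₁,…,g_d}` an `(x,∂)`-Gröbner basis of
`N`. For `r, s ∈ ℕ` let `U_{rs}` be the set of terms `w` with `ord_x w ≤ r`,
`ord_∂ w ≤ s`, such that either `w` is a multiple of no `u_{gᵢ}`, or
`ord_∂(θ v_{gⱼ}) > s` whenever `w = θ u_{gⱼ}`. Then `π(U_{rs})` is a basis of
the `K`-vector space `M_{rs} = Σᵢ W_{rs} fᵢ`. -/
theorem image_of_Urs_is_basis
    (K : Type*) [Field K] [CharZero K] (n m : ℕ) (hn : 1 ≤ n) (hm : 1 ≤ m)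
    (M : Type*) [AddCommGroup M] [Module (WeylAlgebra K n) M]
    [Module K M] [IsScalarTower K (WeylAlgebra K n) M]
    (fgen : Fin m → M)
    (hgen : Submodule.span (WeylAlgebra K n) (Set.range fgen) = ⊤)
    (E : Type*) [AddCommGroup E] [Module (WeylAlgebra K n) E]
    [Module K E] [IsScalarTower K (WeylAlgebra K n) E]
    (B : Module.Basis (WTerm n m) K E)
    (hB : ∀ (θ : WMon n) (j : Fin m), B (θ, j) = wMonOf K n θ • B ((0 : WMon n), j))
    (π : E →ₗ[WeylAlgebra K n] M)
    (hπ : ∀ j : Fin m, π (B ((0 : WMon n), j)) = fgen j)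
    (d : ℕ) (G : Fin d → E)
    (hG : IsXDGroebnerBasis B G (LinearMap.ker π))
    (r s : ℕ) (U : Set (WTerm n m))
    (hU : U = {w : WTerm n m | ordX w.1 ≤ r ∧ ordD w.1 ≤ s ∧
      ((∀ (i : Fin d) (u : WTerm n m), IsXLeader B (G i) u → ¬ termDvd u w) ∨
       (∀ (j : Fin d) (u v : WTerm n m), IsXLeader B (G j) u → IsDLeader B (G j) v →
          termDvd u w → s < ordD (termQuot w u) + ordD v.1))}) :
    LinearIndependent K (fun t : U => π (B (t : WTerm n m))) ∧
      Submodule.span K ((fun t => π (B t)) '' U) = biFil K n M m fgen r s := by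
  classical
  set πK : E →ₗ[K] M := LinearMap.restrictScalars K π with hπKdef
  have hπK_apply : ∀ x : E, πK x = π x := fun x => rfl
  have hπB : ∀ (θ : WMon n) (j : Fin m), π (B (θ, j)) = wMonOf K n θ • fgen j := by
    intro θ j
    rw [hB θ j, map_smul, hπ j]
  set SpanU : Submodule K M := Submodule.span K ((fun t => π (B t)) '' U) with hSpanU
  set Box : Set (WTerm n m) := {t | ordX t.1 ≤ r ∧ ordD t.1 ≤ s} with hBoxdef
  have hBoxFin : Box.Finite := by
    have h1 : {f : Fin n → ℕ | ∀ i, f i ≤ r}.Finite := by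
      refine Set.Finite.subset (Set.Finite.pi (fun i : Fin n => Set.finite_Iic r)) ?_
      intro f hf i _
      exact hf i
    have h2 : {f : Fin n → ℕ | ∀ i, f i ≤ s}.Finite := by
      refine Set.Finite.subset (Set.Finite.pi (fun i : Fin n => Set.finite_Iic s)) ?_
      intro f hf i _
      exact hf i
    refine Set.Finite.subset (((h1.prod h2).prod (Set.finite_univ (α := Fin m)))) ?_
    rintro ⟨⟨a, b⟩, j⟩ ⟨hx, hd⟩
    refine ⟨⟨fun i => ?_, fun i => ?_⟩, trivial⟩
    · exact le_trans (Finset.single_le_sum (fun k _ => Nat.zero_le (a k)) (Finset.mem_univ i)) hx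
    · exact le_trans (Finset.single_le_sum (fun k _ => Nat.zero_le (b k)) (Finset.mem_univ i)) hd
  set meas : WTerm n m → ℕ :=
    fun w => (hBoxFin.toFinset.filter (fun t => embX t < embX w)).card with hmeasdef
  have hmeas : ∀ w' w : WTerm n m, w' ∈ Box → embX w' < embX w → meas w' < meas w := by
    intro w' w hw' hlt
    apply Finset.card_lt_card
    constructor
    · intro t ht
      rw [Finset.mem_filter] at ht ⊢
      exact ⟨ht.1, lt_trans ht.2 hlt⟩
    · intro hsub
      have hmem : w' ∈ hBoxFin.toFinset.filter (fun t => embX t < embX w) := by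
        rw [Finset.mem_filter, Set.Finite.mem_toFinset]
        exact ⟨hw', hlt⟩
      have := hsub hmem
      rw [Finset.mem_filter] at this
      exact lt_irrefl _ this.2
  -- The key reduction lemma.
  have hkey : ∀ (k : ℕ) (w : WTerm n m), w ∈ Box → meas w < k → π (B w) ∈ SpanU := by
    intro k
    induction k with
    | zero => intro w _ h; exact absurd h (Nat.not_lt_zero _)
    | succ k ih =>
      intro w hwB hwk
      by_cases hwU : w ∈ U
      · exact Submodule.subset_span ⟨w, hwU, rfl⟩
      · rw [hU] at hwU
        simp only [Set.mem_setOf_eq] at hwU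
        push_neg at hwU
        obtain ⟨-, jj, u, v, hXu, hDv, hdvd, hbound⟩ := hwU hwB.1 hwB.2
        set θ : WMon n := termQuot w u with hθdef
        have hwmul : termMulMon θ u = w := termMulMon_quot hdvd
        have hc : B.repr (G jj) u ≠ 0 := hXu.1
        have hordXu : ordX w.1 = ordX θ + ordX u.1 := by
          rw [← hwmul]; exact ordX_monMul θ u.1
        have hsupp_le : ∀ t : WTerm n m, B.repr (G jj) t ≠ 0 →
            ordX t.1 ≤ ordX u.1 ∧ ordD t.1 ≤ ordD v.1 := by
          intro t ht
          constructor
          · rcases hXu.2 t ht with rfl | hlt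
            · exact le_refl _
            · exact termLtX_ordX_le hlt
          · rcases hDv.2 t ht with rfl | hlt
            · exact le_refl _
            · exact termLtD_ordD_le hlt
        set T : Set (WTerm n m) := Box ∩ {t | embX t < embX w} with hTdef
        have hsubset : ∀ t : WTerm n m, B.repr (G jj) t ≠ 0 →
            errSet m (∑ i, (θ.1 + t.1.1) i) (∑ i, (θ.2 + t.1.2) i) t.2 ⊆ T := by
          intro t ht τ hτ
          obtain ⟨hτj, hτ1, hτ2⟩ := hτ
          have hb := hsupp_le t ht
          have e1 : (∑ i, (θ.1 + t.1.1) i) = ordX θ + ordX t.1 := sum_add' θ.1 t.1.1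
          have e2 : (∑ i, (θ.2 + t.1.2) i) = ordD θ + ordD t.1 := sum_add' θ.2 t.1.2
          have hx : ordX τ.1 < ordX w.1 := by omega
          have hd : ordD τ.1 ≤ s := by omega
          have hr : ordX τ.1 ≤ r := le_trans hx.le hwB.1
          exact ⟨⟨hr, hd⟩, termLtX_iff.mp (Or.inl (Or.inl hx))⟩
        have hterm : ∀ t : WTerm n m, B.repr (G jj) t ≠ 0 →
            wMonOf K n θ • B t - (if t = u then B w else 0) ∈ Submodule.span K (B '' T) := by
          intro t ht
          have hexp' : wMonOf K n θ • B t - B ((θ.1 + t.1.1, θ.2 + t.1.2), t.2) ∈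
              Submodule.span K (B '' errSet m (∑ i, (θ.1 + t.1.1) i)
                (∑ i, (θ.2 + t.1.2) i) t.2) := exp_full B hB θ t.1.1 t.1.2 t.2
          have hspan : wMonOf K n θ • B t - B ((θ.1 + t.1.1, θ.2 + t.1.2), t.2) ∈
              Submodule.span K (B '' T) :=
            Submodule.span_mono (Set.image_mono (hsubset t ht)) hexp'
          by_cases htu : t = u
          · rw [if_pos htu]
            have hw' : B w = B ((θ.1 + t.1.1, θ.2 + t.1.2), t.2) := by
              rw [← hwmul, ← htu]
              rfl
            rw [hw']
            exact hspan
          · rw [if_neg htu, sub_zero]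
            have hsplit : wMonOf K n θ • B t
                = B ((θ.1 + t.1.1, θ.2 + t.1.2), t.2)
                  + (wMonOf K n θ • B t - B ((θ.1 + t.1.1, θ.2 + t.1.2), t.2)) := by
              abel
            rw [hsplit]
            refine Submodule.add_mem _ ?_ hspan
            have hlt : termLtX t u := by
              rcases hXu.2 t ht with h | h
              · exact absurd h htu
              · exact h
            have hltw : termLtX (termMulMon θ t) w := by
              rw [← hwmul]
              exact termLtX_termMulMon hlt
            have hbox : ((θ.1 + t.1.1, θ.2 + t.1.2), t.2) ∈ Box := by
              have hb := hsupp_le t ht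
              have e1 : ordX ((θ.1 + t.1.1, θ.2 + t.1.2) : WMon n) = ordX θ + ordX t.1 :=
                sum_add' θ.1 t.1.1
              have e2 : ordD ((θ.1 + t.1.1, θ.2 + t.1.2) : WMon n) = ordD θ + ordD t.1 :=
                sum_add' θ.2 t.1.2
              have hbr : ordX w.1 ≤ r := hwB.1
              refine ⟨?_, ?_⟩
              · show ordX ((θ.1 + t.1.1, θ.2 + t.1.2) : WMon n) ≤ r
                omega
              · show ordD ((θ.1 + t.1.1, θ.2 + t.1.2) : WMon n) ≤ s
                omega
            refine Submodule.subset_span ⟨((θ.1 + t.1.1, θ.2 + t.1.2), t.2), ⟨hbox, ?_⟩, rfl⟩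
            exact termLtX_iff.mp hltw
        have hsum : wMonOf K n θ • (G jj) - (B.repr (G jj) u) • B w
            = (B.repr (G jj)).sum
                fun t c => c • (wMonOf K n θ • B t - (if t = u then B w else 0)) := by
          have hA : ((B.repr (G jj)).sum
                fun t c => c • (wMonOf K n θ • B t - (if t = u then B w else 0)))
              = ((B.repr (G jj)).sum fun t c => c • (wMonOf K n θ • B t))
                - ((B.repr (G jj)).sum fun t c => if t = u then c • B w else 0) := by
            rw [← Finsupp.sum_sub]
            refine Finset.sum_congr rfl fun t _ => ?_
            by_cases h : t = u <;> simp [h, smul_sub]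
          rw [hA, Finsupp.sum_ite_eq', if_pos (Finsupp.mem_support_iff.mpr hc)]
          congr 1
          calc wMonOf K n θ • (G jj)
              = wMonOf K n θ • ((B.repr (G jj)).sum fun t c => c • B t) := by
                rw [← Finsupp.linearCombination_apply, B.linearCombination_repr]
            _ = (B.repr (G jj)).sum fun t c => wMonOf K n θ • (c • B t) := Finsupp.smul_sum
            _ = (B.repr (G jj)).sum fun t c => c • (wMonOf K n θ • B t) := by
                refine Finset.sum_congr rfl fun t _ => ?_
                exact wa_smul_comm _ _ _
        have hmem1 : wMonOf K n θ • (G jj) - (B.repr (G jj) u) • B w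
            ∈ Submodule.span K (B '' T) := by
          rw [hsum]
          apply Submodule.finsuppSum_mem
          intro t ht
          exact Submodule.smul_mem _ _ (hterm t ht)
        have hπ0 : π (G jj) = 0 := LinearMap.mem_ker.mp (hG.2.1 jj)
        have himg : πK (wMonOf K n θ • (G jj) - (B.repr (G jj) u) • B w)
            ∈ Submodule.span K (πK '' (B '' T)) := by
          rw [← Submodule.map_span]
          exact Submodule.mem_map_of_mem hmem1
        have heval : πK (wMonOf K n θ • (G jj) - (B.repr (G jj) u) • B w)
            = -((B.repr (G jj) u) • π (B w)) := by
          rw [map_sub]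
          have h0 : πK (wMonOf K n θ • (G jj)) = 0 := by
            rw [hπK_apply, map_smul, hπ0, smul_zero]
          rw [h0, zero_sub, map_smul, hπK_apply]
        have hle : Submodule.span K (πK '' (B '' T)) ≤ SpanU := by
          rw [Submodule.span_le]
          rintro x ⟨y, ⟨t', ht', rfl⟩, rfl⟩
          have ht'm : meas t' < k := lt_of_lt_of_le (hmeas t' w ht'.1 ht'.2)
            (Nat.lt_succ_iff.mp hwk)
          rw [hπK_apply]
          exact ih t' ht'.1 ht'm
        have hneg : -((B.repr (G jj) u) • π (B w)) ∈ SpanU := by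
          rw [← heval]
          exact hle himg
        have hcs : (B.repr (G jj) u) • π (B w) ∈ SpanU := (Submodule.neg_mem_iff _).mp hneg
        have : π (B w) = (B.repr (G jj) u)⁻¹ • ((B.repr (G jj) u) • π (B w)) := by
          rw [inv_smul_smul₀ hc]
        rw [this]
        exact Submodule.smul_mem _ _ hcs
  constructor
  · -- linear independence
    rw [linearIndependent_iff]
    intro l hl
    set emb : U ↪ WTerm n m := ⟨Subtype.val, Subtype.val_injective⟩ with hembdef
    set l' : WTerm n m →₀ K := Finsupp.embDomain emb l with hl'def
    set f : E := Finsupp.linearCombination K (⇑B) l' with hfdef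
    have hreprf : B.repr f = l' := B.repr_linearCombination l'
    have hsuppU : ∀ t : WTerm n m, B.repr f t ≠ 0 → t ∈ U := by
      intro t ht
      rw [hreprf] at ht
      have hmem := Finsupp.mem_support_iff.mpr ht
      rw [hl'def, Finsupp.support_embDomain] at hmem
      obtain ⟨a, -, rfl⟩ := Finset.mem_map.mp hmem
      exact a.2
    have hπf : π f = 0 := by
      have h1 : πK f = Finsupp.linearCombination K (fun t : U => π (B t)) l := by
        rw [hfdef, Finsupp.apply_linearCombination, hl'def,
          Finsupp.linearCombination_embDomain]
        rfl
      rw [← hπK_apply, h1, hl]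
    by_cases hf0 : f = 0
    · have hz : l' = 0 := by rw [← hreprf, hf0, map_zero]
      exact Finsupp.embDomain_eq_zero.mp hz
    · exfalso
      obtain ⟨i, uf, vf, ui, vi, huf, hvf, hui, hvi, hdvd, hineq⟩ :=
        hG.2.2 f (LinearMap.mem_ker.mpr hπf) hf0
      have hufU : uf ∈ U := hsuppU uf huf.1
      have hvfU : vf ∈ U := hsuppU vf hvf.1
      rw [hU] at hufU hvfU
      obtain ⟨hufx, hufd, hPQ⟩ := hufU
      obtain ⟨-, hvfd, -⟩ := hvfU
      rcases hPQ with hP | hQ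
      · exact hP i ui hui hdvd
      · have h1 := hQ i ui vi hui hvi hdvd
        have h2 : ordD (termQuot uf ui) + ordD ui.1 = ordD uf.1 := ordD_quot_add hdvd.2
        omega
  · -- span equality
    have hbiFil : biFil K n M m fgen r s = Submodule.span K {x : M |
        ∃ (α β : Fin n → ℕ) (j : Fin m),
          (∑ i, α i) ≤ r ∧ (∑ i, β i) ≤ s ∧ x = wMon K n α β • fgen j} := rfl
    apply le_antisymm
    · rw [Submodule.span_le]
      rintro x ⟨t, htU, rfl⟩
      rw [hU] at htU
      obtain ⟨htx, htd, -⟩ := htU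
      have heq : π (B t) = wMonOf K n t.1 • fgen t.2 := hπB t.1 t.2
      rw [hbiFil]
      exact Submodule.subset_span ⟨t.1.1, t.1.2, t.2, htx, htd, heq⟩
    · rw [hbiFil, Submodule.span_le]
      rintro x ⟨α, β, j, hα, hβ, rfl⟩
      have heq : wMon K n α β • fgen j = π (B ((α, β), j)) := (hπB (α, β) j).symm
      rw [heq]
      exact hkey (meas ((α, β), j) + 1) ((α, β), j) ⟨hα, hβ⟩ (Nat.lt_succ_self _)
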